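/- arXiv:1303.2389 — 2 statements merged into one kernel-verified Lean document; each statement's English description precedes it below -/
import Mathlib

section
/- Fix an integer B ≥ 1. Then ∫_{τ²}^∞ (√x − τ)² x^{B/2−1} e^{−x/2} dx ∼ 4 e^{−τ²/2} τ^{B−4} as τ → ∞, i.e., lim_{τ→∞} e^{τ²/2} τ^{4−B} ∫_{τ²}^∞ (√x − τ)² x^{B/2−1} e^{−x/2} dx = 4. -/
open MeasureTheory Real Set Filter Topology

lemma im1 (τ : ℝ) (hτ : 0 < τ) :
    (fun v : ℝ => (τ + v / τ) ^ 2) '' Ioi 0 = Ioi (τ ^ 2) := by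
  ext x
  constructor
  · rintro ⟨v, hv, rfl⟩
    simp only [mem_Ioi] at hv ⊢
    have h1 : 0 < v / τ := div_pos hv hτ
    nlinarith
  · intro hx
    simp only [mem_Ioi] at hx
    have hx0 : (0:ℝ) ≤ x := le_of_lt (lt_of_le_of_lt (sq_nonneg τ) hx)
    have hsx : τ < Real.sqrt x := by
      have := Real.sqrt_lt_sqrt (sq_nonneg τ) hx
      rwa [Real.sqrt_sq hτ.le] at this
    refine ⟨(Real.sqrt x - τ) * τ, ?_, ?_⟩
    · exact mul_pos (by linarith) hτ
    · have : τ + (Real.sqrt x - τ) * τ / τ = Real.sqrt x := by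
        field_simp
        ring
      simp only []
      rw [this, Real.sq_sqrt hx0]

lemma deriv1 (τ : ℝ) (hτ : 0 < τ) (v : ℝ) :
    HasDerivAt (fun v : ℝ => (τ + v / τ) ^ 2) (2 * (τ + v / τ) / τ) v := by
  have h : HasDerivAt (fun v : ℝ => τ + v / τ) (1 / τ) v := by
    simpa using ((hasDerivAt_id v).div_const τ).const_add τ
  have := h.fun_pow 2
  exact this.congr_deriv (by ring)

lemma inj1 (τ : ℝ) (hτ : 0 < τ) :
    InjOn (fun v : ℝ => (τ + v / τ) ^ 2) (Ioi 0) := by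
  have : StrictMonoOn (fun v : ℝ => (τ + v / τ) ^ 2) (Ioi 0) := by
    intro a ha b hb hab
    simp only [mem_Ioi] at ha hb
    have h1 : 0 < a / τ := div_pos ha hτ
    have h2 : a / τ < b / τ := by
      exact div_lt_div_of_pos_right hab hτ
    simp only []
    have h1' : 0 < τ + a / τ := by positivity
    nlinarith
  exact this.injOn

lemma key_subst (B : ℕ) (τ : ℝ) (hτ : 1 ≤ τ) :
    Real.exp (τ ^ 2 / 2) * τ ^ ((4 : ℝ) - B) *
        ∫ x in Ioi (τ ^ 2),
          (Real.sqrt x - τ) ^ 2 * x ^ ((B : ℝ) / 2 - 1) * Real.exp (-x / 2)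
      = ∫ v in Ioi (0:ℝ),
          2 * v ^ 2 * (1 + v / τ ^ 2) ^ ((B : ℝ) - 1) *
            Real.exp (-v - v ^ 2 / (2 * τ ^ 2)) := by
  have hτ0 : (0:ℝ) < τ := lt_of_lt_of_le one_pos hτ
  have hτne : τ ≠ 0 := hτ0.ne'
  rw [← im1 τ hτ0,
    integral_image_eq_integral_abs_deriv_smul measurableSet_Ioi
      (fun v _ => ((deriv1 τ hτ0 v).hasDerivWithinAt)) (inj1 τ hτ0),
    ← MeasureTheory.integral_const_mul]
  refine setIntegral_congr_fun measurableSet_Ioi (fun v hv => ?_)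
  simp only [mem_Ioi] at hv
  have ha : (0:ℝ) < τ + v / τ := by positivity
  set a : ℝ := τ + v / τ with hadef
  have h1 : Real.sqrt (a ^ 2) = a := Real.sqrt_sq ha.le
  have h3 : |2 * a / τ| = 2 * a / τ := abs_of_pos (by positivity)
  have h2 : ((a ^ 2 : ℝ)) ^ ((B : ℝ) / 2 - 1) = a ^ ((B : ℝ) - 2) := by
    rw [← Real.rpow_natCast a 2, ← Real.rpow_mul ha.le]
    norm_num
    ring_nf
  have h4 : a ^ ((B : ℝ) - 2) * a = a ^ ((B : ℝ) - 1) := by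
    rw [show (B:ℝ) - 1 = ((B:ℝ) - 2) + 1 by ring, Real.rpow_add_one ha.ne']
  have h5 : a ^ ((B : ℝ) - 1) = τ ^ ((B : ℝ) - 1) * (1 + v / τ ^ 2) ^ ((B : ℝ) - 1) := by
    rw [show a = τ * (1 + v / τ ^ 2) by rw [hadef]; field_simp,
      Real.mul_rpow hτ0.le (by positivity)]
  have h6 : τ ^ ((4:ℝ) - B) * τ ^ ((B : ℝ) - 1) = τ ^ 3 := by
    rw [← Real.rpow_add hτ0, ← Real.rpow_natCast τ 3]
    norm_num
  have h7 : Real.exp (τ ^ 2 / 2) * Real.exp (-a ^ 2 / 2)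
      = Real.exp (-v - v ^ 2 / (2 * τ ^ 2)) := by
    rw [← Real.exp_add]
    congr 1
    rw [hadef]
    field_simp
    ring
  simp only [smul_eq_mul, h1, h3, h2]
  have hstep : a ^ ((B:ℝ) - 2) = τ ^ ((B : ℝ) - 1) * (1 + v / τ ^ 2) ^ ((B : ℝ) - 1) / a := by
    rw [← h5, eq_div_iff ha.ne', h4]
  rw [hstep]
  have hP : (0:ℝ) < τ ^ ((B:ℝ) - 1) := Real.rpow_pos_of_pos hτ0 _
  calc Real.exp (τ ^ 2 / 2) * τ ^ ((4:ℝ) - B) *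
        (2 * a / τ * ((a - τ) ^ 2 * (τ ^ ((B : ℝ) - 1) * (1 + v / τ ^ 2) ^ ((B : ℝ) - 1) / a)
          * Real.exp (-a ^ 2 / 2)))
      = (τ ^ ((4:ℝ) - B) * τ ^ ((B : ℝ) - 1)) * (1 + v / τ ^ 2) ^ ((B : ℝ) - 1) *
          (2 * (a - τ) ^ 2 / τ) * (Real.exp (τ ^ 2 / 2) * Real.exp (-a ^ 2 / 2)) := by
        field_simp
    _ = 2 * v ^ 2 * (1 + v / τ ^ 2) ^ ((B : ℝ) - 1) * Real.exp (-v - v ^ 2 / (2 * τ ^ 2)) := by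
        rw [h6, h7, show a - τ = v / τ by rw [hadef]; ring]
        field_simp

lemma integrable_pow_exp (k : ℕ) :
    IntegrableOn (fun v : ℝ => v ^ k * Real.exp (-v)) (Ioi 0) := by
  have h := Real.GammaIntegral_convergent (s := (k:ℝ) + 1) (by positivity)
  refine h.congr_fun (fun x hx => ?_) measurableSet_Ioi
  simp only [mem_Ioi] at hx
  beta_reduce
  rw [show ((k:ℝ) + 1 - 1) = ((k:ℕ):ℝ) by ring, Real.rpow_natCast]
  ring

lemma pow_bound (n : ℕ) (v : ℝ) (hv : 0 ≤ v) : (1 + v) ^ n ≤ 2 ^ n * (1 + v ^ n) := by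
  have h1 : 1 + v ≤ 2 * max 1 v := by
    rcases le_total v 1 with h | h
    · have := le_max_left (1:ℝ) v; linarith
    · have := le_max_right (1:ℝ) v; linarith
  calc (1 + v) ^ n ≤ (2 * max 1 v) ^ n := pow_le_pow_left₀ (by linarith) h1 n
    _ = 2 ^ n * (max 1 v) ^ n := mul_pow 2 (max 1 v) n
    _ ≤ 2 ^ n * (1 + v ^ n) := by
        have : (max 1 v) ^ n ≤ 1 + v ^ n := by
          rcases le_total v 1 with h | h
          · rw [max_eq_left h]
            have : (0:ℝ) ≤ v ^ n := pow_nonneg hv n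
            simp; linarith
          · rw [max_eq_right h]
            have : (0:ℝ) ≤ (1:ℝ) := zero_le_one
            linarith [pow_nonneg hv n]
        nlinarith [pow_nonneg hv n, pow_pos (show (0:ℝ) < 2 by norm_num) n]

lemma lim_integral (B : ℕ) :
    (∫ v in Ioi (0:ℝ), 2 * v ^ 2 * Real.exp (-v)) = 4 := by
  have h2 : (∫ v in Ioi (0:ℝ), Real.exp (-v) * v ^ ((3:ℝ) - 1)) = Real.Gamma 3 :=
    (Real.Gamma_eq_integral (by norm_num)).symm
  have h3 : Real.Gamma 3 = 2 := by
    rw [show (3:ℝ) = (2:ℕ) + 1 by norm_num, Real.Gamma_nat_eq_factorial]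
    norm_num
  have h4 : (∫ v in Ioi (0:ℝ), 2 * v ^ 2 * Real.exp (-v))
      = 2 * ∫ v in Ioi (0:ℝ), Real.exp (-v) * v ^ ((3:ℝ) - 1) := by
    rw [← MeasureTheory.integral_const_mul]
    refine setIntegral_congr_fun measurableSet_Ioi (fun v hv => ?_)
    simp only [mem_Ioi] at hv
    rw [show ((3:ℝ) - 1) = ((2:ℕ):ℝ) by norm_num, Real.rpow_natCast]
    ring
  rw [h4, h2, h3]
  norm_num

lemma hB1 (B : ℕ) (hB : 1 ≤ B) : (0:ℝ) ≤ (B:ℝ) - 1 := by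
  have : (1:ℝ) ≤ (B:ℝ) := by exact_mod_cast hB
  linarith

lemma Fcont (B : ℕ) (hB : 1 ≤ B) (τ : ℝ) :
    Continuous (fun v : ℝ => 2 * v ^ 2 * (1 + v / τ ^ 2) ^ ((B : ℝ) - 1) *
      Real.exp (-v - v ^ 2 / (2 * τ ^ 2))) := by
  have h1 : Continuous (fun v : ℝ => (1 + v / τ ^ 2) ^ ((B : ℝ) - 1)) :=
    (Real.continuous_rpow_const (hB1 B hB)).comp
      (continuous_const.add (continuous_id.div_const _))
  fun_prop

lemma dct (B : ℕ) (hB : 1 ≤ B) :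
    Tendsto (fun τ : ℝ => ∫ v in Ioi (0:ℝ),
        2 * v ^ 2 * (1 + v / τ ^ 2) ^ ((B : ℝ) - 1) *
          Real.exp (-v - v ^ 2 / (2 * τ ^ 2)))
      atTop (𝓝 (∫ v in Ioi (0:ℝ), 2 * v ^ 2 * Real.exp (-v))) := by
  apply tendsto_integral_filter_of_dominated_convergence
    (bound := fun v => 2 * 2 ^ (B - 1) * (v ^ 2 * Real.exp (-v) + v ^ (B + 1) * Real.exp (-v)))
  · filter_upwards with τ
    exact (Fcont B hB τ).aestronglyMeasurable
  · filter_upwards [eventually_ge_atTop (1:ℝ)] with τ hτ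
    rw [ae_restrict_iff' measurableSet_Ioi]
    filter_upwards with v hv
    simp only [mem_Ioi] at hv
    have hτ0 : (0:ℝ) < τ := lt_of_lt_of_le one_pos hτ
    have hbase : (0:ℝ) ≤ 1 + v / τ ^ 2 := by positivity
    have hF0 : (0:ℝ) ≤ 2 * v ^ 2 * (1 + v / τ ^ 2) ^ ((B : ℝ) - 1) *
        Real.exp (-v - v ^ 2 / (2 * τ ^ 2)) := by positivity
    rw [Real.norm_eq_abs, abs_of_nonneg hF0]
    have step1 : (1 + v / τ ^ 2) ^ ((B : ℝ) - 1) ≤ (1 + v) ^ ((B : ℝ) - 1) := by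
      apply Real.rpow_le_rpow hbase _ (hB1 B hB)
      have : v / τ ^ 2 ≤ v := by
        rw [div_le_iff₀ (by positivity)]
        nlinarith [mul_nonneg hv.le (mul_nonneg (sub_nonneg.2 hτ) (by linarith : (0:ℝ) ≤ τ + 1))]
      linarith
    have step2 : (1 + v) ^ ((B : ℝ) - 1) = (1 + v) ^ (B - 1 : ℕ) := by
      rw [← Real.rpow_natCast (1 + v) (B - 1)]
      congr 1
      rw [Nat.cast_sub hB]
      norm_num
    have step3 : (1 + v) ^ (B - 1 : ℕ) ≤ 2 ^ (B - 1) * (1 + v ^ (B - 1 : ℕ)) :=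
      pow_bound (B - 1) v hv.le
    have step4 : Real.exp (-v - v ^ 2 / (2 * τ ^ 2)) ≤ Real.exp (-v) := by
      apply Real.exp_le_exp.mpr
      have : (0:ℝ) ≤ v ^ 2 / (2 * τ ^ 2) := by positivity
      linarith
    have hexp0 : (0:ℝ) < Real.exp (-v) := Real.exp_pos _
    calc 2 * v ^ 2 * (1 + v / τ ^ 2) ^ ((B : ℝ) - 1) * Real.exp (-v - v ^ 2 / (2 * τ ^ 2))
        ≤ 2 * v ^ 2 * ((1 + v) ^ ((B : ℝ) - 1)) * Real.exp (-v) := by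
          apply mul_le_mul _ step4 (Real.exp_pos _).le (by positivity)
          apply mul_le_mul_of_nonneg_left step1 (by positivity)
      _ = 2 * v ^ 2 * ((1 + v) ^ (B - 1 : ℕ)) * Real.exp (-v) := by rw [step2]
      _ ≤ 2 * v ^ 2 * (2 ^ (B - 1) * (1 + v ^ (B - 1 : ℕ))) * Real.exp (-v) := by
          apply mul_le_mul_of_nonneg_right _ hexp0.le
          apply mul_le_mul_of_nonneg_left step3 (by positivity)
      _ = 2 * 2 ^ (B - 1) * (v ^ 2 * Real.exp (-v) + v ^ 2 * v ^ (B - 1 : ℕ) * Real.exp (-v)) := by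
          ring
      _ = 2 * 2 ^ (B - 1) * (v ^ 2 * Real.exp (-v) + v ^ (B + 1) * Real.exp (-v)) := by
          have hvp : v ^ 2 * v ^ (B - 1) = v ^ (B + 1) := by
            rw [← pow_add]
            congr 1
            omega
          rw [hvp]
  · apply Integrable.const_mul
    exact (integrable_pow_exp 2).add (integrable_pow_exp (B + 1))
  · rw [ae_restrict_iff' measurableSet_Ioi]
    filter_upwards with v hv
    simp only [mem_Ioi] at hv
    have hd : Tendsto (fun τ : ℝ => v / τ ^ 2) atTop (𝓝 0) :=
      Tendsto.div_atTop tendsto_const_nhds (tendsto_pow_atTop two_ne_zero)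
    have hd2 : Tendsto (fun τ : ℝ => v ^ 2 / (2 * τ ^ 2)) atTop (𝓝 0) :=
      Tendsto.div_atTop tendsto_const_nhds
        ((tendsto_pow_atTop two_ne_zero).const_mul_atTop two_pos)
    have hbase : Tendsto (fun τ : ℝ => (1 + v / τ ^ 2) ^ ((B : ℝ) - 1)) atTop (𝓝 1) := by
      have := (tendsto_const_nhds (x := (1:ℝ)) (f := atTop)).add hd
      rw [add_zero] at this
      have h2 := this.rpow_const (p := (B : ℝ) - 1) (Or.inl one_ne_zero)
      rwa [Real.one_rpow] at h2
    have hexp : Tendsto (fun τ : ℝ => Real.exp (-v - v ^ 2 / (2 * τ ^ 2))) atTop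
        (𝓝 (Real.exp (-v))) := by
      have h3 : Tendsto (fun τ : ℝ => -v - v ^ 2 / (2 * τ ^ 2)) atTop (𝓝 (-v)) := by
        have := (tendsto_const_nhds (x := (-v:ℝ)) (f := atTop)).sub hd2
        rwa [sub_zero] at this
      exact (Real.continuous_exp.tendsto _).comp h3
    have := ((tendsto_const_nhds (x := (2 * v ^ 2 : ℝ)) (f := atTop)).mul hbase).mul hexp
    rwa [mul_one] at this

/-- `∫_{τ²}^∞ (√x − τ)² x^{B/2−1} e^{−x/2} dx ∼ 4 e^{−τ²/2} τ^{B−4}` as `τ → ∞`. -/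
theorem stmt5 (B : ℕ) (hB : 1 ≤ B) :
    Tendsto
      (fun τ : ℝ =>
        Real.exp (τ ^ 2 / 2) * τ ^ ((4 : ℝ) - B) *
          ∫ x in Ioi (τ ^ 2),
            (Real.sqrt x - τ) ^ 2 * x ^ ((B : ℝ) / 2 - 1) * Real.exp (-x / 2))
      atTop (nhds 4) := by
  have h := dct B hB
  rw [lim_integral B] at h
  apply h.congr'
  filter_upwards [eventually_ge_atTop (1:ℝ)] with τ hτ
  exact (key_subst B τ hτ).symm
end

section
/- Fix an integer B ≥ 1 and let f(x) = x^{B/2−1} e^{−x/2} / (2^{B/2} Γ(B/2)). For τ > 0 define D(τ) = [−(B + τ²) ∫_{τ²}^∞ (τ − √x) f(x) dx + τ ∫_{τ²}^∞ (√x − τ)² f(x) dx] / [Bτ − B ∫_{τ²}^∞ (τ − √x) f(x) dx] and R(τ) = [B·D(τ) − ∫_{τ²}^∞ (√x − τ)² f(x) dx] / [D(τ)(B + τ² − ∫_{τ²}^∞ (√x − τ)² f(x) dx)]. Then lim_{τ→∞} R(τ) · τ² / B = 1, i.e., the group LASSO phase transition satisfies ρ ∼ B/τ² along the parametrization by the optimal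 threshold τ. -/
set_option maxHeartbeats 1000000


open MeasureTheory Real Set Filter
open Topology

/-- The chi-square density with `B` degrees of freedom. -/
noncomputable def chiSqDensity (B : ℕ) (x : ℝ) : ℝ :=
  x ^ ((B : ℝ) / 2 - 1) * Real.exp (-x / 2) /
    ((2 : ℝ) ^ ((B : ℝ) / 2) * Real.Gamma ((B : ℝ) / 2))

/-- The undersampling ratio `δ` of the group LASSO phase transition, parametrized by
the optimal block soft threshold `τ`. -/
noncomputable def groupLassoDelta (B : ℕ) (τ : ℝ) : ℝ :=
  (-(B + τ ^ 2) * (∫ x in Ioi (τ ^ 2), (τ - Real.sqrt x) * chiSqDensity B x) +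
      τ * ∫ x in Ioi (τ ^ 2), (Real.sqrt x - τ) ^ 2 * chiSqDensity B x) /
    (B * τ - B * ∫ x in Ioi (τ ^ 2), (τ - Real.sqrt x) * chiSqDensity B x)

/-- The normalized sparsity `ρ` of the group LASSO phase transition, parametrized by
the optimal block soft threshold `τ`. -/
noncomputable def groupLassoRho (B : ℕ) (τ : ℝ) : ℝ :=
  (B * groupLassoDelta B τ - ∫ x in Ioi (τ ^ 2), (Real.sqrt x - τ) ^ 2 * chiSqDensity B x) /
    (groupLassoDelta B τ *
      (B + τ ^ 2 - ∫ x in Ioi (τ ^ 2), (Real.sqrt x - τ) ^ 2 * chiSqDensity B x))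


noncomputable def KB (B : ℕ) : ℝ := (2 : ℝ) ^ ((B : ℝ) / 2) * Real.Gamma ((B : ℝ) / 2)

lemma KB_pos (B : ℕ) (hB : 1 ≤ B) : 0 < KB B := by
  have h1 : (0:ℝ) < (B:ℝ) / 2 := by
    have : (1:ℝ) ≤ (B:ℝ) := by exact_mod_cast hB
    linarith
  exact mul_pos (Real.rpow_pos_of_pos two_pos _) (Real.Gamma_pos_of_pos h1)

noncomputable def C0 (B : ℕ) : ℝ := 4 ^ B * (B.factorial : ℝ) * Real.exp 1

lemma one_le_C0 (B : ℕ) : 1 ≤ C0 B := by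
  have h1 : (1:ℝ) ≤ 4 ^ B := one_le_pow₀ (by norm_num)
  have h2 : (1:ℝ) ≤ (B.factorial : ℝ) := by exact_mod_cast B.factorial_pos
  have h3 : (1:ℝ) ≤ Real.exp 1 := by
    linarith [Real.add_one_le_exp (1:ℝ)]
  calc (1:ℝ) = 1 * 1 * 1 := by ring
  _ ≤ 4 ^ B * (B.factorial : ℝ) * Real.exp 1 := by
      apply mul_le_mul (mul_le_mul h1 h2 one_pos.le (by linarith)) h3 one_pos.le
      positivity

noncomputable def J2 : ℝ := ∫ u in Ioi (0:ℝ), u ^ 2 * Real.exp (-u / 4)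

lemma int_pow_exp (n : ℕ) : IntegrableOn (fun u : ℝ => u ^ n * Real.exp (-u / 4)) (Ioi 0) := by
  have h := integrableOn_rpow_mul_exp_neg_mul_rpow (s := (n:ℝ)) (p := 1) (b := 1/4)
    (by exact_mod_cast neg_one_lt_zero.trans_le (Nat.cast_nonneg n)) one_pos (by norm_num)
  refine h.congr_fun (fun x hx => ?_) measurableSet_Ioi
  dsimp only
  rw [Real.rpow_natCast, Real.rpow_one]
  ring_nf

lemma indicator_shift (h : ℝ → ℝ) (c : ℝ) :
    (Ioi c).indicator (fun x => h (x - c)) = fun x => (Ioi 0).indicator h (x - c) := by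
  funext x
  by_cases hx : c < x
  · rw [indicator_of_mem (mem_Ioi.2 hx), indicator_of_mem (mem_Ioi.2 (by simp [sub_pos, hx]))]
  · rw [indicator_of_notMem (by simpa using hx),
      indicator_of_notMem (by simp [mem_Ioi]; linarith [not_lt.1 hx])]

lemma integrableOn_shift {h : ℝ → ℝ} (c : ℝ) (hh : IntegrableOn h (Ioi 0)) :
    IntegrableOn (fun x => h (x - c)) (Ioi c) := by
  rw [← integrable_indicator_iff measurableSet_Ioi] at hh
  have h2 := hh.comp_sub_right c
  rw [← indicator_shift] at h2
  exact (integrable_indicator_iff measurableSet_Ioi).mp h2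

lemma integral_shift (h : ℝ → ℝ) (c : ℝ) :
    ∫ x in Ioi c, h (x - c) = ∫ x in Ioi 0, h x := by
  rw [← integral_indicator measurableSet_Ioi, ← integral_indicator measurableSet_Ioi,
    indicator_shift]
  exact integral_sub_right_eq_self _ c

lemma sq_rpow (B : ℕ) {τ : ℝ} (hτ0 : 0 < τ) : (τ^2 : ℝ) ^ ((B:ℝ)/2 - 1) = τ ^ ((B:ℝ) - 2) := by
  rw [← Real.rpow_natCast τ 2, ← Real.rpow_mul hτ0.le]
  congr 1
  push_cast
  ring

lemma rpow_bound (B : ℕ) (hB : 1 ≤ B) {τ x : ℝ} (hτ : 2 ≤ τ) (hx : τ^2 ≤ x) :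
    x ^ ((B:ℝ)/2 - 1) ≤ C0 B * τ ^ ((B:ℝ) - 2) * Real.exp ((x - τ^2)/4) := by
  have hτ0 : (0:ℝ) < τ := by linarith
  have hBR : (1:ℝ) ≤ (B:ℝ) := by exact_mod_cast hB
  have hτsq : (1:ℝ) ≤ τ^2 := by nlinarith
  have hx0 : (0:ℝ) < x := by nlinarith
  have hT : (0:ℝ) < τ ^ ((B:ℝ) - 2) := Real.rpow_pos_of_pos hτ0 _
  have hexp1 : (1:ℝ) ≤ Real.exp ((x - τ^2)/4) := Real.one_le_exp (by linarith)
  rcases le_or_gt ((B:ℝ)/2 - 1) 0 with hp | hp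
  · calc x ^ ((B:ℝ)/2 - 1) ≤ (τ^2) ^ ((B:ℝ)/2 - 1) :=
        Real.rpow_le_rpow_of_nonpos (by positivity) hx hp
    _ = τ ^ ((B:ℝ) - 2) := sq_rpow B hτ0
    _ = 1 * τ ^ ((B:ℝ) - 2) * 1 := by ring
    _ ≤ C0 B * τ ^ ((B:ℝ) - 2) * Real.exp ((x - τ^2)/4) := by
        have hc := one_le_C0 B
        apply mul_le_mul (mul_le_mul hc le_rfl hT.le (by linarith)) hexp1 one_pos.le
        nlinarith
  · set u := x - τ^2 with hu
    have hu0 : 0 ≤ u := by simp [hu]; linarith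
    have h1 : x ≤ τ^2 * (1 + u) := by nlinarith
    have h2 : x ^ ((B:ℝ)/2 - 1) ≤ (τ^2 * (1+u)) ^ ((B:ℝ)/2 - 1) :=
      Real.rpow_le_rpow hx0.le h1 hp.le
    have h3 : (τ^2 * (1+u) : ℝ) ^ ((B:ℝ)/2 - 1)
        = (τ^2:ℝ)^((B:ℝ)/2-1) * (1+u)^((B:ℝ)/2-1) :=
      Real.mul_rpow (by positivity) (by linarith)
    have h4 : ((1+u):ℝ)^((B:ℝ)/2-1) ≤ (1+u)^(B:ℝ) :=
      Real.rpow_le_rpow_of_exponent_le (by linarith) (by linarith)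
    have h5 : ((1+u):ℝ)^(B:ℝ) = (1+u)^B := Real.rpow_natCast _ B
    have hf : (0:ℝ) < (B.factorial : ℝ) := by exact_mod_cast B.factorial_pos
    have h4B : (0:ℝ) < (4:ℝ)^B := by positivity
    have key := Real.pow_div_factorial_le_exp (x := ((1+u)/4 : ℝ)) (by positivity) B
    rw [div_le_iff₀ hf, div_pow, div_le_iff₀ h4B] at key
    have h6 : ((1+u):ℝ)^B ≤ 4^B * (B.factorial:ℝ) * Real.exp ((1+u)/4) :=
      key.trans_eq (by ring)
    have h7 : Real.exp ((1+u)/4) ≤ Real.exp 1 * Real.exp (u/4) := by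
      rw [← Real.exp_add]
      exact Real.exp_le_exp.2 (by linarith)
    have h8 : ((1+u):ℝ)^B ≤ C0 B * Real.exp (u/4) := by
      calc ((1+u):ℝ)^B ≤ 4^B * (B.factorial:ℝ) * Real.exp ((1+u)/4) := h6
      _ ≤ 4^B * (B.factorial:ℝ) * (Real.exp 1 * Real.exp (u/4)) := by
          apply mul_le_mul_of_nonneg_left h7 (by positivity)
      _ = C0 B * Real.exp (u/4) := by rw [C0]; ring
    calc x ^ ((B:ℝ)/2 - 1) ≤ (τ^2:ℝ)^((B:ℝ)/2-1) * (1+u)^((B:ℝ)/2-1) := h2.trans_eq h3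
    _ = τ ^ ((B:ℝ)-2) * ((1+u):ℝ)^((B:ℝ)/2-1) := by rw [sq_rpow B hτ0]
    _ ≤ τ ^ ((B:ℝ)-2) * (C0 B * Real.exp (u/4)) := by
        apply mul_le_mul_of_nonneg_left _ hT.le
        calc ((1+u):ℝ)^((B:ℝ)/2-1) ≤ (1+u)^(B:ℝ) := h4
        _ = ((1+u):ℝ)^B := h5
        _ ≤ C0 B * Real.exp (u/4) := h8
    _ = C0 B * τ ^ ((B:ℝ) - 2) * Real.exp (u/4) := by ring

lemma density_eq (B : ℕ) (x : ℝ) :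
    chiSqDensity B x = x ^ ((B:ℝ)/2 - 1) * Real.exp (-x/2) / KB B := rfl

lemma density_upper (B : ℕ) (hB : 1 ≤ B) {τ x : ℝ} (hτ : 2 ≤ τ) (hx : τ^2 ≤ x) :
    chiSqDensity B x ≤ C0 B / KB B * τ ^ ((B:ℝ)-2) * Real.exp (-τ^2/2) *
      Real.exp (-(x - τ^2)/4) := by
  have hK := KB_pos B hB
  have hτ0 : (0:ℝ) < τ := by linarith
  have hx0 : (0:ℝ) < x := by nlinarith
  have h1 := rpow_bound B hB hτ hx
  have h3 : Real.exp ((x-τ^2)/4) * Real.exp (-x/2)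
      = Real.exp (-τ^2/2) * Real.exp (-(x-τ^2)/4) := by
    rw [← Real.exp_add, ← Real.exp_add]
    ring_nf
  rw [density_eq]
  rw [div_le_iff₀ hK]
  calc x ^ ((B:ℝ)/2-1) * Real.exp (-x/2)
      ≤ C0 B * τ ^ ((B:ℝ)-2) * Real.exp ((x-τ^2)/4) * Real.exp (-x/2) :=
        mul_le_mul_of_nonneg_right h1 (Real.exp_nonneg _)
  _ = C0 B * τ ^ ((B:ℝ)-2) * (Real.exp (-τ^2/2) * Real.exp (-(x-τ^2)/4)) := by
      rw [mul_assoc, h3]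
  _ = C0 B / KB B * τ ^ ((B:ℝ)-2) * Real.exp (-τ^2/2) * Real.exp (-(x - τ^2)/4) * KB B := by
      field_simp

lemma density_lower (B : ℕ) (hB : 1 ≤ B) {τ x : ℝ} (hτ : 2 ≤ τ)
    (hx1 : τ^2 ≤ x) (hx2 : x ≤ τ^2 + 1) :
    τ ^ ((B:ℝ)-2) / 2 * Real.exp (-(1:ℝ)/2) * Real.exp (-τ^2/2) / KB B ≤ chiSqDensity B x := by
  have hK := KB_pos B hB
  have hτ0 : (0:ℝ) < τ := by linarith
  have hBR : (1:ℝ) ≤ (B:ℝ) := by exact_mod_cast hB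
  have hτsq : (1:ℝ) ≤ τ^2 := by nlinarith
  have hx0 : (0:ℝ) < x := by nlinarith
  have hT : (0:ℝ) < τ ^ ((B:ℝ) - 2) := Real.rpow_pos_of_pos hτ0 _
  have hE : Real.exp (-(1:ℝ)/2) * Real.exp (-τ^2/2) ≤ Real.exp (-x/2) := by
    rw [← Real.exp_add]
    exact Real.exp_le_exp.2 (by linarith)
  have hP : τ ^ ((B:ℝ)-2) / 2 ≤ x ^ ((B:ℝ)/2 - 1) := by
    rcases le_or_gt 0 ((B:ℝ)/2 - 1) with hp | hp
    · have h1 : (τ^2:ℝ)^((B:ℝ)/2-1) ≤ x ^ ((B:ℝ)/2-1) :=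
        Real.rpow_le_rpow (by positivity) hx1 hp
      rw [sq_rpow B hτ0] at h1
      linarith
    · have hxle : x ≤ 2*τ^2 := by nlinarith
      have h1 : (2*τ^2:ℝ)^((B:ℝ)/2-1) ≤ x ^ ((B:ℝ)/2-1) :=
        Real.rpow_le_rpow_of_nonpos hx0 hxle hp.le
      have h2 : (2*τ^2:ℝ)^((B:ℝ)/2-1) = (2:ℝ)^((B:ℝ)/2-1) * (τ^2:ℝ)^((B:ℝ)/2-1) :=
        Real.mul_rpow two_pos.le (by positivity)
      have h3 : (2:ℝ)^(-1:ℝ) ≤ (2:ℝ)^((B:ℝ)/2-1) :=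
        Real.rpow_le_rpow_of_exponent_le one_le_two (by linarith)
      have h4 : (2:ℝ)^(-1:ℝ) = 1/2 := by
        rw [Real.rpow_neg_one]
        norm_num
      rw [sq_rpow B hτ0] at h2
      rw [h4] at h3
      nlinarith
  calc τ ^ ((B:ℝ)-2) / 2 * Real.exp (-(1:ℝ)/2) * Real.exp (-τ^2/2) / KB B
      = (τ ^ ((B:ℝ)-2) / 2) * (Real.exp (-(1:ℝ)/2) * Real.exp (-τ^2/2)) / KB B := by ring
  _ ≤ x ^ ((B:ℝ)/2 - 1) * Real.exp (-x/2) / KB B := by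
      have hnum : (τ ^ ((B:ℝ)-2) / 2) * (Real.exp (-(1:ℝ)/2) * Real.exp (-τ^2/2))
          ≤ x ^ ((B:ℝ)/2 - 1) * Real.exp (-x/2) :=
        mul_le_mul hP hE (by positivity) (Real.rpow_nonneg hx0.le _)
      exact div_le_div_of_nonneg_right hnum hK.le
  _ = chiSqDensity B x := (density_eq B x).symm

lemma sqrt_ub {τ x : ℝ} (hτ : 0 < τ) (hx : τ^2 ≤ x) :
    0 ≤ Real.sqrt x - τ ∧ Real.sqrt x - τ ≤ (x - τ^2)/(2*τ) := by
  have hx0 : (0:ℝ) ≤ x := by nlinarith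
  have hsq : Real.sqrt x ^ 2 = x := Real.sq_sqrt hx0
  have hs : τ ≤ Real.sqrt x := by
    nlinarith [Real.sqrt_nonneg x]
  constructor
  · linarith
  · rw [le_div_iff₀ (by linarith : (0:ℝ) < 2*τ)]
    nlinarith [sq_nonneg (Real.sqrt x - τ)]

lemma sqrt_lb {τ x : ℝ} (hτ : 2 ≤ τ) (hx1 : τ^2 ≤ x) (hx2 : x ≤ τ^2 + 1) :
    (x - τ^2)/(3*τ) ≤ Real.sqrt x - τ := by
  have hτ0 : (0:ℝ) < τ := by linarith
  have hx0 : (0:ℝ) ≤ x := by nlinarith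
  have hsq : Real.sqrt x ^ 2 = x := Real.sq_sqrt hx0
  have hs : τ ≤ Real.sqrt x := by nlinarith [Real.sqrt_nonneg x]
  have hs2 : Real.sqrt x ≤ 2*τ := by nlinarith [Real.sqrt_nonneg x]
  rw [div_le_iff₀ (by linarith : (0:ℝ) < 3*τ)]
  nlinarith

lemma density_nonneg (B : ℕ) (hB : 1 ≤ B) {x : ℝ} (hx : 0 < x) : 0 ≤ chiSqDensity B x := by
  rw [density_eq]
  exact div_nonneg (mul_nonneg (Real.rpow_nonneg hx.le _) (Real.exp_nonneg _)) (KB_pos B hB).le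

lemma density_meas (B : ℕ) : Measurable (chiSqDensity B) := by
  unfold chiSqDensity
  exact ((measurable_id.pow measurable_const).mul ((measurable_id.neg.div_const 2).exp)).div_const _

noncomputable def aInt (B : ℕ) (τ : ℝ) : ℝ :=
  ∫ x in Ioi (τ^2), (Real.sqrt x - τ) * chiSqDensity B x

noncomputable def cInt (B : ℕ) (τ : ℝ) : ℝ :=
  ∫ x in Ioi (τ^2), (Real.sqrt x - τ)^2 * chiSqDensity B x

lemma integrable_g1 (B : ℕ) (hB : 1 ≤ B) {τ : ℝ} (hτ : 2 ≤ τ) :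
    IntegrableOn (fun x => (Real.sqrt x - τ) * chiSqDensity B x) (Ioi (τ^2)) := by
  have hτ0 : (0:ℝ) < τ := by linarith
  set M : ℝ := C0 B / KB B * τ ^ ((B:ℝ)-2) * Real.exp (-τ^2/2) / (2*τ) with hM
  have hM0 : 0 ≤ M := by
    have := KB_pos B hB
    have := one_le_C0 B
    have : (0:ℝ) < C0 B := by linarith
    positivity
  have hg : IntegrableOn (fun x => M * ((x - τ^2)^1 * Real.exp (-(x-τ^2)/4))) (Ioi (τ^2)) :=
    integrableOn_shift (h := fun u => M * (u^1 * Real.exp (-u/4))) (τ^2)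
      ((int_pow_exp 1).const_mul M)
  apply Integrable.mono' hg
  · exact ((Real.continuous_sqrt.measurable.sub measurable_const).mul
      (density_meas B)).aestronglyMeasurable
  · rw [ae_restrict_iff' measurableSet_Ioi]
    filter_upwards with x hx
    have hx' : τ^2 ≤ x := (mem_Ioi.1 hx).le
    have hx0 : (0:ℝ) < x := by nlinarith
    obtain ⟨hs0, hs1⟩ := sqrt_ub hτ0 hx'
    have hd0 := density_nonneg B hB hx0
    have hdu := density_upper B hB hτ hx'
    rw [Real.norm_eq_abs, abs_of_nonneg (mul_nonneg hs0 hd0)]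
    calc (Real.sqrt x - τ) * chiSqDensity B x
        ≤ ((x - τ^2)/(2*τ)) * (C0 B / KB B * τ ^ ((B:ℝ)-2) * Real.exp (-τ^2/2) *
            Real.exp (-(x - τ^2)/4)) :=
          mul_le_mul hs1 hdu hd0 (div_nonneg (by linarith) (by linarith))
    _ = M * ((x - τ^2)^1 * Real.exp (-(x-τ^2)/4)) := by rw [hM]; ring

lemma integrable_g2 (B : ℕ) (hB : 1 ≤ B) {τ : ℝ} (hτ : 2 ≤ τ) :
    IntegrableOn (fun x => (Real.sqrt x - τ)^2 * chiSqDensity B x) (Ioi (τ^2)) := by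
  have hτ0 : (0:ℝ) < τ := by linarith
  set M : ℝ := C0 B / KB B * τ ^ ((B:ℝ)-2) * Real.exp (-τ^2/2) / (4*τ^2) with hM
  have hg : IntegrableOn (fun x => M * ((x - τ^2)^2 * Real.exp (-(x-τ^2)/4))) (Ioi (τ^2)) :=
    integrableOn_shift (h := fun u => M * (u^2 * Real.exp (-u/4))) (τ^2)
      ((int_pow_exp 2).const_mul M)
  apply Integrable.mono' hg
  · exact (((Real.continuous_sqrt.measurable.sub measurable_const).pow_const 2).mul
      (density_meas B)).aestronglyMeasurable
  · rw [ae_restrict_iff' measurableSet_Ioi]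
    filter_upwards with x hx
    have hx' : τ^2 ≤ x := (mem_Ioi.1 hx).le
    have hx0 : (0:ℝ) < x := by nlinarith
    obtain ⟨hs0, hs1⟩ := sqrt_ub hτ0 hx'
    have hd0 := density_nonneg B hB hx0
    have hdu := density_upper B hB hτ hx'
    rw [Real.norm_eq_abs, abs_of_nonneg (mul_nonneg (by positivity) hd0)]
    have hsq : (Real.sqrt x - τ)^2 ≤ ((x - τ^2)/(2*τ))^2 := by
      apply pow_le_pow_left₀ hs0 hs1
    calc (Real.sqrt x - τ)^2 * chiSqDensity B x
        ≤ ((x - τ^2)/(2*τ))^2 * (C0 B / KB B * τ ^ ((B:ℝ)-2) * Real.exp (-τ^2/2) *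
            Real.exp (-(x - τ^2)/4)) :=
          mul_le_mul hsq hdu hd0 (by positivity)
    _ = M * ((x - τ^2)^2 * Real.exp (-(x-τ^2)/4)) := by rw [hM]; field_simp; ring

lemma cInt_nonneg (B : ℕ) (hB : 1 ≤ B) {τ : ℝ} (hτ : 2 ≤ τ) : 0 ≤ cInt B τ := by
  apply setIntegral_nonneg measurableSet_Ioi
  intro x hx
  have hx0 : (0:ℝ) < x := by nlinarith [mem_Ioi.1 hx]
  exact mul_nonneg (sq_nonneg _) (density_nonneg B hB hx0)

lemma cInt_le (B : ℕ) (hB : 1 ≤ B) {τ : ℝ} (hτ : 2 ≤ τ) :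
    cInt B τ ≤ C0 B / KB B * τ ^ ((B:ℝ)-2) * Real.exp (-τ^2/2) / (4*τ^2) * J2 := by
  have hτ0 : (0:ℝ) < τ := by linarith
  set M : ℝ := C0 B / KB B * τ ^ ((B:ℝ)-2) * Real.exp (-τ^2/2) / (4*τ^2) with hM
  have h1 : cInt B τ ≤ ∫ x in Ioi (τ^2), M * ((x - τ^2)^2 * Real.exp (-(x-τ^2)/4)) := by
    apply setIntegral_mono_on (integrable_g2 B hB hτ)
      (integrableOn_shift (h := fun u => M * (u^2 * Real.exp (-u/4))) (τ^2)
        ((int_pow_exp 2).const_mul M)) measurableSet_Ioi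
    intro x hx
    have hx' : τ^2 ≤ x := (mem_Ioi.1 hx).le
    have hx0 : (0:ℝ) < x := by nlinarith
    obtain ⟨hs0, hs1⟩ := sqrt_ub hτ0 hx'
    have hd0 := density_nonneg B hB hx0
    have hdu := density_upper B hB hτ hx'
    have hsq : (Real.sqrt x - τ)^2 ≤ ((x - τ^2)/(2*τ))^2 := pow_le_pow_left₀ hs0 hs1 2
    calc (Real.sqrt x - τ)^2 * chiSqDensity B x
        ≤ ((x - τ^2)/(2*τ))^2 * (C0 B / KB B * τ ^ ((B:ℝ)-2) * Real.exp (-τ^2/2) *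
            Real.exp (-(x - τ^2)/4)) :=
          mul_le_mul hsq hdu hd0 (by positivity)
    _ = M * ((x - τ^2)^2 * Real.exp (-(x-τ^2)/4)) := by rw [hM]; field_simp; ring
  have h2 : (∫ x in Ioi (τ^2), M * ((x - τ^2)^2 * Real.exp (-(x-τ^2)/4))) = M * J2 := by
    rw [integral_const_mul]
    congr 1
    exact integral_shift (fun u => u^2 * Real.exp (-u/4)) (τ^2)
  rw [h2] at h1
  exact h1

lemma aInt_ge (B : ℕ) (hB : 1 ≤ B) {τ : ℝ} (hτ : 2 ≤ τ) :
    τ ^ ((B:ℝ)-2) * Real.exp (-(1:ℝ)/2) * Real.exp (-τ^2/2) / (12 * τ * KB B) ≤ aInt B τ := by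
  have hτ0 : (0:ℝ) < τ := by linarith
  have hK := KB_pos B hB
  set κ : ℝ := τ ^ ((B:ℝ)-2) * Real.exp (-(1:ℝ)/2) * Real.exp (-τ^2/2) / (6 * τ * KB B) with hκ
  have hκ0 : 0 < κ := by
    have hT : (0:ℝ) < τ ^ ((B:ℝ) - 2) := Real.rpow_pos_of_pos hτ0 _
    positivity
  have step1 : (∫ x in Ioc (τ^2) (τ^2+1), κ * (x - τ^2))
      ≤ ∫ x in Ioc (τ^2) (τ^2+1), (Real.sqrt x - τ) * chiSqDensity B x := by
    apply setIntegral_mono_on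
    · exact (continuous_const.mul (continuous_id.sub continuous_const)).integrableOn_Ioc
    · exact (integrable_g1 B hB hτ).mono_set Ioc_subset_Ioi_self
    · exact measurableSet_Ioc
    · intro x hx
      obtain ⟨hx1, hx2⟩ := hx
      have hlb := sqrt_lb hτ hx1.le hx2
      have hdl := density_lower B hB hτ hx1.le hx2
      have hT : (0:ℝ) < τ ^ ((B:ℝ) - 2) := Real.rpow_pos_of_pos hτ0 _
      have h0 : 0 ≤ Real.sqrt x - τ := (sqrt_ub hτ0 hx1.le).1
      calc κ * (x - τ^2)
          = ((x - τ^2)/(3*τ)) * (τ ^ ((B:ℝ)-2) / 2 * Real.exp (-(1:ℝ)/2) *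
              Real.exp (-τ^2/2) / KB B) := by rw [hκ]; field_simp; ring
      _ ≤ (Real.sqrt x - τ) * chiSqDensity B x :=
          mul_le_mul hlb hdl (by positivity) h0
  have step2 : aInt B τ ≥ ∫ x in Ioc (τ^2) (τ^2+1), (Real.sqrt x - τ) * chiSqDensity B x := by
    apply setIntegral_mono_set (integrable_g1 B hB hτ)
    · refine (ae_restrict_iff' measurableSet_Ioi).2 (ae_of_all _ fun x hx => ?_)
      have hx0 : (0:ℝ) < x := by nlinarith [mem_Ioi.1 hx]
      exact mul_nonneg (sqrt_ub hτ0 (mem_Ioi.1 hx).le).1 (density_nonneg B hB hx0)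
    · exact HasSubset.Subset.eventuallyLE Ioc_subset_Ioi_self
  have step3 : (∫ x in Ioc (τ^2) (τ^2+1), κ * (x - τ^2)) = κ * (1/2) := by
    rw [integral_const_mul]
    congr 1
    rw [← intervalIntegral.integral_of_le (by linarith : τ^2 ≤ τ^2+1)]
    have h10 := intervalIntegral.integral_comp_sub_right (a := τ^2) (b := τ^2+1)
      (fun u : ℝ => u) (τ^2)
    simp only [sub_self, add_sub_cancel_left] at h10
    rw [h10, integral_id]
    norm_num
  have : κ * (1/2) ≤ aInt B τ := by
    rw [← step3]
    exact step1.trans step2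
  calc τ ^ ((B:ℝ)-2) * Real.exp (-(1:ℝ)/2) * Real.exp (-τ^2/2) / (12 * τ * KB B)
      = κ * (1/2) := by rw [hκ]; ring
  _ ≤ aInt B τ := this

lemma algebra_key (b τ a c : ℝ) (hb : 1 ≤ b) (hτ : 2 ≤ τ) (ha : 0 < a) (hc : 0 ≤ c)
    (hbc : c < b + τ^2) :
    (b * ((-(b + τ^2) * (-a) + τ * c) / (b * τ - b * (-a))) - c) /
      (((-(b + τ^2) * (-a) + τ * c) / (b * τ - b * (-a))) * (b + τ^2 - c)) * τ^2 / b
    = (b / τ^2 + 1 + c / (τ * a))⁻¹ := by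
  have hτ0 : (0:ℝ) < τ := by linarith
  have hD : (-(b + τ^2) * (-a) + τ * c) / (b * τ - b * (-a))
      = ((b + τ^2) * a + τ * c) / (b * (τ + a)) := by
    congr 1 <;> ring
  rw [hD]
  have hN : (b + τ^2) * a + τ * c ≠ 0 := by nlinarith
  have hTA : τ + a ≠ 0 := ne_of_gt (by linarith)
  have h3 : b + τ^2 - c ≠ 0 := by nlinarith
  have hb0 : b ≠ 0 := by linarith
  have ha0 : a ≠ 0 := ne_of_gt ha
  have hτ0' : τ ≠ 0 := ne_of_gt hτ0
  field_simp
  ring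

lemma J2_nonneg : 0 ≤ J2 :=
  setIntegral_nonneg measurableSet_Ioi fun x _ => by positivity

/-- The group LASSO phase transition satisfies `ρ ∼ B/τ²` along the parametrization by the
optimal threshold `τ`. -/
theorem stmt10 (B : ℕ) (hB : 1 ≤ B) :
    Tendsto (fun τ : ℝ => groupLassoRho B τ * τ ^ 2 / B) atTop (nhds 1) := by
  have hK := KB_pos B hB
  have hC0 := one_le_C0 B
  have hJ2 := J2_nonneg
  have hBR : (1:ℝ) ≤ (B:ℝ) := by exact_mod_cast hB
  have haux : ∀ τ:ℝ, 2 ≤ τ → 0 < aInt B τ := by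
    intro τ hτ
    refine lt_of_lt_of_le ?_ (aInt_ge B hB hτ)
    have hτ0 : (0:ℝ) < τ := by linarith
    have hT := Real.rpow_pos_of_pos hτ0 ((B:ℝ)-2)
    positivity
  -- simplified upper bound for cInt
  have hcub : ∀ τ : ℝ, 2 ≤ τ →
      cInt B τ ≤ (C0 B / KB B * J2) * (τ ^ ((B:ℝ)-2) * Real.exp (-1*τ)) := by
    intro τ hτ
    have h1 := cInt_le B hB hτ
    have hτ0 : (0:ℝ) < τ := by linarith
    have hT : (0:ℝ) < τ ^ ((B:ℝ)-2) := Real.rpow_pos_of_pos hτ0 _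
    have h2 : Real.exp (-τ^2/2) / (4*τ^2) ≤ Real.exp (-1*τ) := by
      calc Real.exp (-τ^2/2) / (4*τ^2) ≤ Real.exp (-τ^2/2) :=
            div_le_self (Real.exp_nonneg _) (by nlinarith)
      _ ≤ Real.exp (-1*τ) := Real.exp_le_exp.2 (by nlinarith)
    calc cInt B τ ≤ C0 B / KB B * τ ^ ((B:ℝ)-2) * Real.exp (-τ^2/2) / (4*τ^2) * J2 := h1
    _ = (C0 B / KB B * J2 * τ ^ ((B:ℝ)-2)) * (Real.exp (-τ^2/2) / (4*τ^2)) := by ring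
    _ ≤ (C0 B / KB B * J2 * τ ^ ((B:ℝ)-2)) * Real.exp (-1*τ) := by
        apply mul_le_mul_of_nonneg_left h2
        have : (0:ℝ) < C0 B := by linarith
        positivity
    _ = (C0 B / KB B * J2) * (τ ^ ((B:ℝ)-2) * Real.exp (-1*τ)) := by ring
  have hW : Tendsto (fun τ:ℝ => (C0 B / KB B * J2) * (τ ^ ((B:ℝ)-2) * Real.exp (-1*τ)))
      atTop (𝓝 0) := by
    have := (tendsto_rpow_mul_exp_neg_mul_atTop_nhds_zero ((B:ℝ)-2) 1 one_pos).const_mul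
      (C0 B / KB B * J2)
    simpa using this
  have hc0' : Tendsto (fun τ => cInt B τ) atTop (𝓝 0) := by
    apply tendsto_of_tendsto_of_tendsto_of_le_of_le'
      (tendsto_const_nhds : Tendsto (fun _ : ℝ => (0:ℝ)) atTop (𝓝 0)) hW
    · filter_upwards [eventually_ge_atTop (2:ℝ)] with τ hτ
      exact cInt_nonneg B hB hτ
    · filter_upwards [eventually_ge_atTop (2:ℝ)] with τ hτ
      exact hcub τ hτ
  have hc1 : ∀ᶠ τ : ℝ in atTop, cInt B τ < 1 :=
    hc0'.eventually_lt_const one_pos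
  -- ratio bound
  set K3 : ℝ := 3 * (C0 B * J2) / (KB B * Real.exp (-(1:ℝ)/2) * KB B) * (KB B)
  have hrat_bd : ∀ τ : ℝ, 2 ≤ τ →
      cInt B τ / (τ * aInt B τ) ≤ (3 * C0 B * J2 / Real.exp (-(1:ℝ)/2)) / τ^2 := by
    intro τ hτ
    have hτ0 : (0:ℝ) < τ := by linarith
    have hT : (0:ℝ) < τ ^ ((B:ℝ)-2) := Real.rpow_pos_of_pos hτ0 _
    have hC0p : (0:ℝ) < C0 B := by linarith
    have hL : (0:ℝ) < τ * (τ ^ ((B:ℝ)-2) * Real.exp (-(1:ℝ)/2) * Real.exp (-τ^2/2)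
        / (12 * τ * KB B)) := by positivity
    have hstep : cInt B τ / (τ * aInt B τ)
        ≤ (C0 B / KB B * τ ^ ((B:ℝ)-2) * Real.exp (-τ^2/2) / (4*τ^2) * J2) /
          (τ * (τ ^ ((B:ℝ)-2) * Real.exp (-(1:ℝ)/2) * Real.exp (-τ^2/2) / (12 * τ * KB B))) := by
      apply div_le_div₀ (by positivity) (cInt_le B hB hτ) hL
      exact mul_le_mul_of_nonneg_left (aInt_ge B hB hτ) hτ0.le
    refine hstep.trans_eq ?_
    have hE1 : Real.exp (-τ^2/2) ≠ 0 := (Real.exp_pos _).ne'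
    have hE2 : Real.exp (-(1:ℝ)/2) ≠ 0 := (Real.exp_pos _).ne'
    field_simp
    ring
  have hratio : Tendsto (fun τ : ℝ => cInt B τ / (τ * aInt B τ)) atTop (𝓝 0) := by
    apply tendsto_of_tendsto_of_tendsto_of_le_of_le'
      (tendsto_const_nhds : Tendsto (fun _ : ℝ => (0:ℝ)) atTop (𝓝 0))
      (tendsto_const_nhds.div_atTop (tendsto_pow_atTop (by norm_num : 2 ≠ 0)))
    · filter_upwards [eventually_ge_atTop (2:ℝ)] with τ hτ
      have hτ0 : (0:ℝ) < τ := by linarith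
      exact div_nonneg (cInt_nonneg B hB hτ) (mul_nonneg hτ0.le (haux τ hτ).le)
    · filter_upwards [eventually_ge_atTop (2:ℝ)] with τ hτ
      exact hrat_bd τ hτ
  -- eventual identity
  have heq : ∀ᶠ τ : ℝ in atTop, groupLassoRho B τ * τ^2 / (B:ℝ)
      = ((B:ℝ)/τ^2 + 1 + cInt B τ/(τ * aInt B τ))⁻¹ := by
    filter_upwards [eventually_ge_atTop (2:ℝ), hc1] with τ hτ hcc
    have ha := haux τ hτ
    have hc := cInt_nonneg B hB hτ
    have hI : (∫ x in Ioi (τ^2), (τ - Real.sqrt x) * chiSqDensity B x) = -(aInt B τ) := by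
      show _ = -(∫ x in Ioi (τ^2), (Real.sqrt x - τ) * chiSqDensity B x)
      rw [← integral_neg]
      congr 1
      funext x
      ring
    unfold groupLassoRho groupLassoDelta
    rw [hI]
    exact algebra_key (B:ℝ) τ (aInt B τ) (cInt B τ) hBR hτ ha hc (by nlinarith)
  rw [tendsto_congr' heq]
  have h1 : Tendsto (fun τ:ℝ => (B:ℝ)/τ^2) atTop (𝓝 0) :=
    tendsto_const_nhds.div_atTop (tendsto_pow_atTop (by norm_num : 2 ≠ 0))
  have h2 : Tendsto (fun τ:ℝ => (B:ℝ)/τ^2 + 1 + cInt B τ/(τ * aInt B τ)) atTop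
      (𝓝 ((0:ℝ) + 1 + 0)) :=
    (h1.add (tendsto_const_nhds : Tendsto (fun _ : ℝ => (1:ℝ)) atTop (𝓝 1))).add hratio
  have h3 := h2.inv₀ (by norm_num)
  simpa using h3
end
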